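/- With Q(v) = ψ·sign(v) (ψ > 0) and the biased-optimal scale S = ⟨Rx, Q(Rx)⟩/||Q(Rx)||_2^2, the normalized squared error equals 1 − ||Rx||_1^2/(d·||x||_2^2). In particular, since ||v||_1 ≤ √d·||v||_2, the error is always nonnegative, and since ||v||_1 ≥ ||v||_2 it is at most 1 − 1/d. -/

import Mathlib

open Matrix RealInnerProductSpace

noncomputable def psign (y : ℝ) : ℝ := if 0 ≤ y then 1 else -1

noncomputable def signVec {d : ℕ} (v : EuclideanSpace ℝ (Fin d)) :
    EuclideanSpace ℝ (Fin d) := WithLp.toLp 2 (fun i => psign (v i))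

lemma psign_mul_self (y : ℝ) : y * psign y = |y| := by
  unfold psign; rcases le_or_gt 0 y with h | h
  · simp [if_pos h, abs_of_nonneg h]
  · simp [if_neg (not_le.mpr h), abs_of_neg h]

lemma psign_sq (y : ℝ) : psign y * psign y = 1 := by
  unfold psign; split <;> norm_num

lemma inner_toE {d : ℕ} (R : Matrix (Fin d) (Fin d) ℝ) (hR : Rᵀ * R = 1)
    (u v : EuclideanSpace ℝ (Fin d)) :
    ⟪Matrix.toEuclideanLin R u, Matrix.toEuclideanLin R v⟫ = ⟪u, v⟫ := by
  have h1 : ∀ w : EuclideanSpace ℝ (Fin d), ∀ i,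
      Matrix.toEuclideanLin R w i = R.mulVec w i := fun _ _ => rfl
  simp only [PiLp.inner_apply, RCLike.inner_apply, conj_trivial, h1]
  have : (R *ᵥ ⇑u) ⬝ᵥ (R *ᵥ ⇑v) = (⇑u) ⬝ᵥ (⇑v) := by
    rw [dotProduct_comm, Matrix.dotProduct_mulVec, ← Matrix.mulVec_transpose,
      Matrix.mulVec_mulVec, hR, Matrix.one_mulVec, dotProduct_comm]
  simpa [dotProduct, mul_comm] using this

lemma norm_toE {d : ℕ} (R : Matrix (Fin d) (Fin d) ℝ) (hR : Rᵀ * R = 1)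
    (u : EuclideanSpace ℝ (Fin d)) : ‖Matrix.toEuclideanLin R u‖ = ‖u‖ := by
  have h := inner_toE R hR u u
  rw [real_inner_self_eq_norm_sq, real_inner_self_eq_norm_sq] at h
  exact (sq_eq_sq₀ (norm_nonneg _) (norm_nonneg _)).mp h

theorem drive_two_level_biased_scale_vnmse (d : ℕ) (hd : 0 < d)
    (R : Matrix (Fin d) (Fin d) ℝ) (hR : Rᵀ * R = 1)
    (x : EuclideanSpace ℝ (Fin d)) (hx : x ≠ 0) (ψ : ℝ) (hψ : 0 < ψ) :
    let Rx := Matrix.toEuclideanLin R x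
    let Qv : EuclideanSpace ℝ (Fin d) := ψ • signVec Rx
    let S : ℝ := ⟪Rx, Qv⟫ / ‖Qv‖ ^ 2
    let nse : ℝ := ‖x - S • Matrix.toEuclideanLin R⁻¹ Qv‖ ^ 2 / ‖x‖ ^ 2
    nse = 1 - (∑ i : Fin d, |Rx i|) ^ 2 / (d * ‖x‖ ^ 2) ∧
      0 ≤ nse ∧ nse ≤ 1 - 1 / d := by
  intro Rx Qv S nse
  have hxn : (0:ℝ) < ‖x‖ := norm_pos_iff.mpr hx
  have hdn : (0:ℝ) < (d:ℝ) := Nat.cast_pos.mpr hd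
  have hRx : Rx = Matrix.toEuclideanLin R x := rfl
  have hQv : Qv = ψ • signVec Rx := rfl
  have hSdef : S = ⟪Rx, Qv⟫ / ‖Qv‖ ^ 2 := rfl
  have hnsedef : nse = ‖x - S • Matrix.toEuclideanLin R⁻¹ Qv‖ ^ 2 / ‖x‖ ^ 2 := rfl
  clear_value Rx Qv S nse
  set s : ℝ := ∑ i : Fin d, |Rx i| with hs
  -- inner product values
  have hinner : ⟪Rx, Qv⟫ = ψ * s := by
    rw [hQv]
    simp only [PiLp.inner_apply, RCLike.inner_apply, conj_trivial, PiLp.smul_apply,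
      smul_eq_mul, hs, signVec, PiLp.toLp_apply]
    rw [Finset.mul_sum]
    exact Finset.sum_congr rfl fun i _ => by rw [← psign_mul_self (Rx i)]; ring
  have hQnorm : ‖Qv‖ ^ 2 = ψ ^ 2 * d := by
    rw [← real_inner_self_eq_norm_sq, hQv]
    simp only [PiLp.inner_apply, RCLike.inner_apply, conj_trivial, PiLp.smul_apply,
      smul_eq_mul, signVec, PiLp.toLp_apply]
    have h1 : ∀ i : Fin d, ψ * psign (Rx i) * (ψ * psign (Rx i)) = ψ ^ 2 := fun i => by
      nlinarith [psign_sq (Rx i)]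
    simp [h1, Finset.sum_const, mul_comm]
  have hS : S = s / (ψ * d) := by
    rw [hSdef, hinner, hQnorm]
    field_simp
  -- R invertible facts
  have hRinv : R * R⁻¹ = 1 := by
    rw [Matrix.inv_eq_left_inv hR]; exact mul_eq_one_comm.mp hR
  have hRR : Matrix.toEuclideanLin R (Matrix.toEuclideanLin R⁻¹ Qv) = Qv := by
    have h2 : ∀ i, Matrix.toEuclideanLin R (Matrix.toEuclideanLin R⁻¹ Qv) i = Qv i := by
      intro i
      show (R *ᵥ (R⁻¹ *ᵥ ⇑Qv)) i = Qv i
      rw [Matrix.mulVec_mulVec, hRinv, Matrix.one_mulVec]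
    ext i; exact h2 i
  -- the error norm
  have hkey : ‖x - S • Matrix.toEuclideanLin R⁻¹ Qv‖ ^ 2 = ‖x‖ ^ 2 - s ^ 2 / d := by
    have h1 : ‖x - S • Matrix.toEuclideanLin R⁻¹ Qv‖ = ‖Rx - S • Qv‖ := by
      rw [← norm_toE R hR]
      congr 1
      rw [map_sub, LinearMap.map_smul, hRR, hRx]
    have h4 : ‖S • Qv‖ ^ 2 = S ^ 2 * ‖Qv‖ ^ 2 := by
      rw [norm_smul, mul_pow, Real.norm_eq_abs, sq_abs]
    rw [h1, norm_sub_sq_real, real_inner_smul_right, hinner, h4, hQnorm,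
      hRx, norm_toE R hR, hS]
    field_simp
    ring
  have hnse : nse = 1 - s ^ 2 / (d * ‖x‖ ^ 2) := by
    rw [hnsedef, hkey]
    field_simp
  refine ⟨hnse, hnsedef ▸ div_nonneg (sq_nonneg _) (sq_nonneg _), ?_⟩
  -- upper bound: ‖x‖² ≤ s²
  have hl2 : ‖x‖ ^ 2 ≤ s ^ 2 := by
    have h2 : ‖Rx‖ ^ 2 = ∑ i : Fin d, (Rx i) ^ 2 := by
      rw [← real_inner_self_eq_norm_sq]
      simp only [PiLp.inner_apply, RCLike.inner_apply, conj_trivial, sq]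
    have h3 : ∑ i : Fin d, (Rx i) ^ 2 ≤ s ^ 2 := by
      calc ∑ i : Fin d, (Rx i) ^ 2 = ∑ i : Fin d, |Rx i| ^ 2 := by simp [sq_abs]
        _ ≤ (∑ i : Fin d, |Rx i|) ^ 2 :=
          Finset.sum_sq_le_sq_sum_of_nonneg fun i _ => abs_nonneg _
    calc ‖x‖ ^ 2 = ‖Rx‖ ^ 2 := by rw [hRx, norm_toE R hR]
      _ ≤ s ^ 2 := h2 ▸ h3
  rw [hnse]
  have hb : (1:ℝ) / d ≤ s ^ 2 / (d * ‖x‖ ^ 2) := by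
    rw [div_le_div_iff₀ hdn (by positivity)]
    nlinarith
  linarith
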